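/- Under the same assumptions, the infimum in φ(v) = μ · inf_w ( (v−w)²/2 + ς(w) ) is attained uniquely at ŵ(v) = v − φ'(v)/μ. -/

import Mathlib

lemma tangent_line_le {g : ℝ → ℝ} (hc : ConvexOn ℝ Set.univ g) {x g' : ℝ}
    (hd : HasDerivAt g g' x) (y : ℝ) : g x + g' * (y - x) ≤ g y := by
  rcases lt_trichotomy x y with h | h | h
  · have := hc.le_slope_of_hasDerivAt (Set.mem_univ x) (Set.mem_univ y) h hd
    rw [slope_def_field, le_div_iff₀ (by linarith)] at this
    nlinarith
  · simp [h]
  · have := hc.slope_le_of_hasDerivAt (Set.mem_univ y) (Set.mem_univ x) h hd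
    rw [slope_def_field] at this
    have hxy : x - y > 0 := by linarith
    rw [div_le_iff₀ hxy] at this
    nlinarith

theorem stmt_1 (φ : ℝ → ℝ) (μ : ℝ) (hμ : 0 < μ) (hφ : Differentiable ℝ φ)
    (hconv : ConvexOn ℝ Set.univ (fun v : ℝ => v ^ 2 / 2 - φ v / μ))
    (ς : ℝ → ℝ)
    (hς : ∀ w : ℝ, IsLUB {z : ℝ | ∃ t : ℝ, z = -(w - t) ^ 2 / 2 + φ t / μ} (ς w))
    (v : ℝ) :
    (∀ w : ℝ, (v - (v - deriv φ v / μ)) ^ 2 / 2 + ς (v - deriv φ v / μ)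
        ≤ (v - w) ^ 2 / 2 + ς w) ∧
    (∀ w : ℝ, (∀ w' : ℝ, (v - w) ^ 2 / 2 + ς w ≤ (v - w') ^ 2 / 2 + ς w') →
        w = v - deriv φ v / μ) := by
  set g : ℝ → ℝ := fun t => t ^ 2 / 2 - φ t / μ with hgdef
  set wh : ℝ := v - deriv φ v / μ with hwh
  have hg : HasDerivAt g wh v := by
    have h1 : HasDerivAt (fun t : ℝ => t ^ 2 / 2) v v := by
      simpa using (hasDerivAt_pow 2 v).div_const 2
    have h2 : HasDerivAt (fun t : ℝ => φ t / μ) (deriv φ v / μ) v :=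
      (hφ v).hasDerivAt.div_const μ
    exact h1.sub h2
  -- tangent inequality
  have K : ∀ t : ℝ, g v + wh * (t - v) ≤ g t := fun t => tangent_line_le hconv hg t
  -- lower bound on ς w
  have hlow : ∀ w : ℝ, -(w - v) ^ 2 / 2 + φ v / μ ≤ ς w := fun w =>
    (hς w).1 ⟨v, rfl⟩
  -- upper bound on ς wh
  have hup : ς wh ≤ -(wh - v) ^ 2 / 2 + φ v / μ := by
    apply (hς wh).2
    rintro z ⟨t, rfl⟩
    have := K t
    simp only [hgdef] at this
    nlinarith
  constructor
  · intro w
    have h1 := hlow w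
    have h2 := hlow wh
    nlinarith [hup]
  · intro w hw
    have hfw : (v - w) ^ 2 / 2 + ς w ≤ φ v / μ := by
      have := hw wh
      nlinarith [hup]
    -- w is a subgradient of g at v
    have hsub : ∀ t : ℝ, g v + w * (t - v) ≤ g t := by
      intro t
      have h1 : -(w - t) ^ 2 / 2 + φ t / μ ≤ ς w := (hς w).1 ⟨t, rfl⟩
      simp only [hgdef]
      nlinarith
    have hloc : IsLocalMin (fun t => g t - w * t) v :=
      Filter.Eventually.of_forall (fun t => by have := hsub t; simp; nlinarith)
    have hd : HasDerivAt (fun t => g t - w * t) (wh - w) v := by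
      exact hg.sub (((hasDerivAt_id v).const_mul w).congr_deriv (mul_one w))
    have := hloc.hasDerivAt_eq_zero hd
    linarith [this]
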